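/- In flat Euclidean space ℝⁿ, a smooth curve satisfying the parametrized conformal circle equation γ''' = 3(⟨γ',γ''⟩/⟨γ',γ'⟩)γ'' − (3⟨γ'',γ''⟩/(2⟨γ',γ'⟩))γ' with initial data γ(0), γ'(0) ≠ 0, and γ''(0) parallel to γ'(0) is contained in a straight line. -/

import Mathlib

open scoped RealInnerProductSpace

lemma lemA {f g : ℝ → ℝ} (hg : Continuous g)
    (hf : ∀ τ, HasDerivAt f (g τ * f τ) τ) (h0 : f 0 = 0) : ∀ τ, f τ = 0 := by
  set G : ℝ → ℝ := fun τ => ∫ t in (0:ℝ)..τ, g t with hG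
  have hGd : ∀ τ, HasDerivAt G (g τ) τ := fun τ =>
    (hg.integral_hasStrictDerivAt 0 τ).hasDerivAt
  set h : ℝ → ℝ := fun τ => Real.exp (-G τ) * f τ with hh
  have hd : ∀ τ, HasDerivAt h 0 τ := by
    intro τ
    have : HasDerivAt h (Real.exp (-G τ) * (-(g τ)) * f τ
        + Real.exp (-G τ) * (g τ * f τ)) τ :=
      (((hGd τ).neg.exp)).mul (hf τ)
    convert this using 1
    ring
  have hcon : ∀ τ, h τ = h 0 := by
    intro τ
    exact is_const_of_deriv_eq_zero (fun x => (hd x).differentiableAt)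
      (fun x => (hd x).deriv) τ 0
  intro τ
  have hτ := hcon τ
  have : Real.exp (-G τ) * f τ = 0 := by
    have : h τ = 0 := by rw [hτ]; simp [hh, h0]
    simpa [hh] using this
  rcases mul_eq_zero.mp this with h1 | h1
  · exact absurd h1 (Real.exp_ne_zero _)
  · exact h1

set_option maxHeartbeats 1000000 in
/-- In flat Euclidean ℝⁿ, a smooth curve solving the parametrized conformal circle
equation `γ''' = 3(⟨γ',γ''⟩/⟨γ',γ'⟩) γ'' − (3⟨γ'',γ''⟩/(2⟨γ',γ'⟩)) γ'`
with `γ'(0) ≠ 0` and `γ''(0)` parallel to `γ'(0)` is contained in the straight line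
`γ(0) + ℝ·γ'(0)`. -/
theorem stmt6 (n : ℕ) (hn : 3 ≤ n)
    (γ : ℝ → EuclideanSpace ℝ (Fin n)) (hsm : ContDiff ℝ (⊤ : ℕ∞) γ)
    (hreg : ∀ τ : ℝ, deriv γ τ ≠ 0)
    (heq : ∀ τ : ℝ,
      iteratedDeriv 3 γ τ
        = (3 * (⟪deriv γ τ, iteratedDeriv 2 γ τ⟫ / ⟪deriv γ τ, deriv γ τ⟫))
            • iteratedDeriv 2 γ τ
          - (3 * ⟪iteratedDeriv 2 γ τ, iteratedDeriv 2 γ τ⟫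
              / (2 * ⟪deriv γ τ, deriv γ τ⟫)) • deriv γ τ)
    (lam : ℝ) (hpar : iteratedDeriv 2 γ 0 = lam • deriv γ 0) :
    ∀ τ : ℝ, ∃ t : ℝ, γ τ = γ 0 + t • deriv γ 0 := by
  set v : ℝ → EuclideanSpace ℝ (Fin n) := deriv γ with hv
  set a : ℝ → EuclideanSpace ℝ (Fin n) := iteratedDeriv 2 γ with ha
  set b : ℝ → EuclideanSpace ℝ (Fin n) := iteratedDeriv 3 γ with hb
  have hva : a = deriv v := by
    rw [ha, hv, show (2:ℕ) = 1 + 1 from rfl, iteratedDeriv_succ, iteratedDeriv_one]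
  have hab : b = deriv a := by
    rw [hb, ha, show (3:ℕ) = 2 + 1 from rfl, iteratedDeriv_succ]
  have hsv : ContDiff ℝ (⊤ : ℕ∞) v := (contDiff_infty_iff_deriv.mp hsm).2
  have hsa : ContDiff ℝ (⊤ : ℕ∞) a := hva ▸ (contDiff_infty_iff_deriv.mp hsv).2
  have hsb : ContDiff ℝ (⊤ : ℕ∞) b := hab ▸ (contDiff_infty_iff_deriv.mp hsa).2
  have hvd : ∀ τ, HasDerivAt γ (v τ) τ := fun τ =>
    (hsm.differentiable (by simp) τ).hasDerivAt
  have had : ∀ τ, HasDerivAt v (a τ) τ := fun τ => by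
    rw [hva]; exact (hsv.differentiable (by simp) τ).hasDerivAt
  have hbd : ∀ τ, HasDerivAt a (b τ) τ := fun τ => by
    rw [hab]; exact (hsa.differentiable (by simp) τ).hasDerivAt
  have hp0 : ∀ τ, ⟪v τ, v τ⟫ ≠ 0 := fun τ =>
    inner_self_ne_zero.mpr (hreg τ)
  have hcv : Continuous v := hsv.continuous
  have hca : Continuous a := hsa.continuous
  -- Step 1 : Cauchy–Schwarz defect f ≡ 0
  set f : ℝ → ℝ := fun τ => ⟪a τ, a τ⟫ * ⟪v τ, v τ⟫ - ⟪v τ, a τ⟫ ^ 2 with hf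
  set g : ℝ → ℝ := fun τ => 6 * ⟪v τ, a τ⟫ / ⟪v τ, v τ⟫ with hg
  have hgc : Continuous g := by
    apply Continuous.div
    · exact (continuous_const.mul ((hcv.inner hca)))
    · exact hcv.inner hcv
    · exact hp0
  have hfd : ∀ τ, HasDerivAt f (g τ * f τ) τ := by
    intro τ
    have h1 : HasDerivAt (fun t => ⟪a t, a t⟫) (⟪a τ, b τ⟫ + ⟪b τ, a τ⟫) τ :=
      (hbd τ).inner ℝ (hbd τ)
    have h2 : HasDerivAt (fun t => ⟪v t, v t⟫) (⟪v τ, a τ⟫ + ⟪a τ, v τ⟫) τ :=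
      (had τ).inner ℝ (had τ)
    have h3 : HasDerivAt (fun t => ⟪v t, a t⟫) (⟪v τ, b τ⟫ + ⟪a τ, a τ⟫) τ :=
      (had τ).inner ℝ (hbd τ)
    have h4 := ((h1.mul h2).sub (h3.pow 2))
    convert h4 using 1
    · rfl
    · rfl
    · rfl
    have hbτ := heq τ
    have hcomm : ⟪a τ, v τ⟫ = ⟪v τ, a τ⟫ := real_inner_comm _ _
    have e1 : ⟪a τ, b τ⟫
        = 3 * (⟪v τ, a τ⟫ / ⟪v τ, v τ⟫) * ⟪a τ, a τ⟫
          - 3 * ⟪a τ, a τ⟫ / (2 * ⟪v τ, v τ⟫) * ⟪v τ, a τ⟫ := by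
      rw [hbτ, inner_sub_right, real_inner_smul_right, real_inner_smul_right, hcomm]
    have e2 : ⟪b τ, a τ⟫
        = 3 * (⟪v τ, a τ⟫ / ⟪v τ, v τ⟫) * ⟪a τ, a τ⟫
          - 3 * ⟪a τ, a τ⟫ / (2 * ⟪v τ, v τ⟫) * ⟪v τ, a τ⟫ := by
      rw [real_inner_comm]; exact e1
    have e3 : ⟪v τ, b τ⟫
        = 3 * (⟪v τ, a τ⟫ / ⟪v τ, v τ⟫) * ⟪v τ, a τ⟫
          - 3 * ⟪a τ, a τ⟫ / (2 * ⟪v τ, v τ⟫) * ⟪v τ, v τ⟫ := by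
      rw [hbτ, inner_sub_right, real_inner_smul_right, real_inner_smul_right]
    have hPne := hp0 τ
    simp only [hf, hg]
    rw [e1, e2, e3, hcomm, Nat.cast_ofNat, Nat.add_one_sub_one, pow_one]
    generalize ⟪v τ, v τ⟫ = P at hPne ⊢
    generalize ⟪v τ, a τ⟫ = Q
    generalize ⟪a τ, a τ⟫ = R
    field_simp
    ring
  have hf0 : f 0 = 0 := by
    have hpar' : a 0 = lam • v 0 := hpar
    simp only [hf, hpar', real_inner_smul_left, real_inner_smul_right]
    ring
  have hfz : ∀ τ, f τ = 0 := lemA hgc hfd hf0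
  -- a τ is parallel to v τ
  have hpar2 : ∀ τ, a τ = (⟪v τ, a τ⟫ / ⟪v τ, v τ⟫) • v τ := by
    intro τ
    have hcomm : ⟪a τ, v τ⟫ = ⟪v τ, a τ⟫ := real_inner_comm _ _
    have hfτ := hfz τ
    simp only [hf] at hfτ
    have hPne := hp0 τ
    have hz : ⟪a τ - (⟪v τ, a τ⟫ / ⟪v τ, v τ⟫) • v τ,
        a τ - (⟪v τ, a τ⟫ / ⟪v τ, v τ⟫) • v τ⟫ = (0:ℝ) := by
      simp only [inner_sub_left, inner_sub_right, real_inner_smul_left,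
        real_inner_smul_right, hcomm]
      generalize ⟪v τ, v τ⟫ = P at hPne hfτ ⊢
      generalize ⟪v τ, a τ⟫ = Q at hfτ ⊢
      generalize ⟪a τ, a τ⟫ = R at hfτ ⊢
      field_simp
      nlinarith [hfτ]
    have h0 := inner_self_eq_zero.mp hz
    have := sub_eq_zero.mp h0
    exact this
  -- Step 2: v τ is parallel to v 0
  set h2f : ℝ → ℝ := fun τ => ⟪v τ, v τ⟫ * ⟪v 0, v 0⟫ - ⟪v τ, v 0⟫ ^ 2 with hh2f
  set g2 : ℝ → ℝ := fun τ => 2 * ⟪v τ, a τ⟫ / ⟪v τ, v τ⟫ with hg2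
  have hg2c : Continuous g2 := by
    apply Continuous.div
    · exact continuous_const.mul (hcv.inner hca)
    · exact hcv.inner hcv
    · exact hp0
  have hh2d : ∀ τ, HasDerivAt h2f (g2 τ * h2f τ) τ := by
    intro τ
    have h2 : HasDerivAt (fun t => ⟪v t, v t⟫) (⟪v τ, a τ⟫ + ⟪a τ, v τ⟫) τ :=
      (had τ).inner ℝ (had τ)
    have h5 : HasDerivAt (fun t => ⟪v t, v 0⟫) (⟪v τ, (0:EuclideanSpace ℝ (Fin n))⟫ + ⟪a τ, v 0⟫) τ :=
      (had τ).inner ℝ (hasDerivAt_const τ (v 0))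
    have h6 := ((h2.mul_const ⟪v 0, v 0⟫).sub (h5.pow 2))
    convert h6 using 1
    · rfl
    · rfl
    · rfl
    have hcomm : ⟪a τ, v τ⟫ = ⟪v τ, a τ⟫ := real_inner_comm _ _
    have haτ := hpar2 τ
    have e7 : ⟪a τ, v 0⟫ = ⟪v τ, a τ⟫ / ⟪v τ, v τ⟫ * ⟪v τ, v 0⟫ := by
      conv_lhs => rw [haτ]
      rw [real_inner_smul_left]
    have hPne := hp0 τ
    simp only [hh2f, hg2]
    rw [e7, hcomm, inner_zero_right, zero_add, Nat.cast_ofNat, Nat.add_one_sub_one, pow_one]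
    generalize ⟪v τ, v τ⟫ = P at hPne ⊢
    generalize ⟪v τ, a τ⟫ = Q
    generalize ⟪v τ, v 0⟫ = S
    generalize ⟪v 0, v 0⟫ = P0
    field_simp
    ring
  have hh2z : ∀ τ, h2f τ = 0 := lemA hg2c hh2d (by simp only [hh2f]; ring)
  have hpar3 : ∀ τ, v τ = (⟪v τ, v 0⟫ / ⟪v 0, v 0⟫) • v 0 := by
    intro τ
    have hP0ne := hp0 0
    have hfτ := hh2z τ
    simp only [hh2f] at hfτ
    have hcomm : ⟪v 0, v τ⟫ = ⟪v τ, v 0⟫ := real_inner_comm _ _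
    have hz : ⟪v τ - (⟪v τ, v 0⟫ / ⟪v 0, v 0⟫) • v 0,
        v τ - (⟪v τ, v 0⟫ / ⟪v 0, v 0⟫) • v 0⟫ = (0:ℝ) := by
      simp only [inner_sub_left, inner_sub_right, real_inner_smul_left,
        real_inner_smul_right, hcomm]
      generalize ⟪v 0, v 0⟫ = P0 at hP0ne hfτ ⊢
      generalize ⟪v τ, v 0⟫ = S at hfτ ⊢
      generalize ⟪v τ, v τ⟫ = P at hfτ ⊢
      field_simp
      linear_combination hfτ
    exact sub_eq_zero.mp (inner_self_eq_zero.mp hz)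
  -- Step 3: integrate
  intro τ
  have hint : ∫ t in (0:ℝ)..τ, v t = γ τ - γ 0 :=
    intervalIntegral.integral_eq_sub_of_hasDerivAt (fun t _ => hvd t)
      (hcv.intervalIntegrable 0 τ)
  have hint2 : ∫ t in (0:ℝ)..τ, v t
      = (∫ t in (0:ℝ)..τ, ⟪v t, v 0⟫ / ⟪v 0, v 0⟫) • v 0 := by
    rw [← intervalIntegral.integral_smul_const]
    exact intervalIntegral.integral_congr fun t _ => hpar3 t
  refine ⟨∫ t in (0:ℝ)..τ, ⟪v t, v 0⟫ / ⟪v 0, v 0⟫, ?_⟩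
  have hfin : γ τ - γ 0 = (∫ t in (0:ℝ)..τ, ⟪v t, v 0⟫ / ⟪v 0, v 0⟫) • v 0 := by
    rw [← hint, hint2]
  exact sub_eq_iff_eq_add'.mp hfin
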